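/- Frequency differentiation: for α ∈ (0,1], n ∈ ℕ, and f such that the conformable Laplace transform F_α(s) = L_α[f](s) converges absolutely for s > s₀ > 0, one has L_α[t^{nα}/α^n · f(t)](s) = (−1)^n (d^n/ds^n) F_α(s) for s > s₀. -/

import Mathlib

open MeasureTheory

private lemma clfd_iter_zero (n : ℕ) :
    iteratedDeriv n (fun _ : ℝ => (0:ℝ)) = fun _ => 0 := by
  induction n with
  | zero => rfl
  | succ n ih => rw [iteratedDeriv_succ, ih]; funext x; simp

private lemma clfd_aesm {f : ℝ → ℝ}
    (hf : AEStronglyMeasurable f (volume.restrict (Set.Ioi (0:ℝ))))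
    (c : ℝ → ℝ) (hc : Measurable c) (g : ℝ → ℝ) (hg : g = fun t => c t * f t) :
    AEStronglyMeasurable g (volume.restrict (Set.Ioi (0:ℝ))) :=
  hg ▸ hc.aestronglyMeasurable.mul hf

private lemma clfd_not_aesm (f c : ℝ → ℝ) (hc : Measurable c)
    (hc0 : ∀ t ∈ Set.Ioi (0:ℝ), c t ≠ 0)
    (hf : ¬ AEStronglyMeasurable f (volume.restrict (Set.Ioi (0:ℝ)))) :
    ¬ AEStronglyMeasurable (fun t => c t * f t) (volume.restrict (Set.Ioi (0:ℝ))) := by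
  intro h
  apply hf
  have h2 : AEStronglyMeasurable (fun t => (c t)⁻¹ * (c t * f t))
      (volume.restrict (Set.Ioi (0:ℝ))) :=
    (hc.inv.aestronglyMeasurable).mul h
  refine h2.congr ?_
  filter_upwards [ae_restrict_mem measurableSet_Ioi] with t ht
  field_simp [hc0 t ht]

/-- Integrability of the weighted integrand. -/
private lemma clfd_intA (α : ℝ) (hα0 : 0 < α) (f : ℝ → ℝ)
    (hf : AEStronglyMeasurable f (volume.restrict (Set.Ioi (0:ℝ))))
    (k : ℕ) (u : ℝ)
    (h : IntegrableOn
      (fun t : ℝ => Real.exp (-u * t ^ α / α) * (t ^ (k * α) * |f t|) * t ^ (α - 1))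
      (Set.Ioi (0:ℝ))) :
    IntegrableOn
      (fun t : ℝ => Real.exp (-u * t ^ α / α) * (t ^ (k * α) / α ^ k * f t) * t ^ (α - 1))
      (Set.Ioi (0:ℝ)) := by
  have hαk : (0:ℝ) < α ^ k := pow_pos hα0 k
  refine (h.const_mul (1/α^k)).mono' ?_ ?_
  · exact clfd_aesm hf
      (fun t => Real.exp (-u * t ^ α / α) * (t ^ ((k:ℝ) * α) / α ^ k) * t ^ (α - 1))
      (by fun_prop) _ (by funext t; ring)
  · filter_upwards [ae_restrict_mem measurableSet_Ioi] with t ht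
    have h1 : (0:ℝ) < t := ht
    rw [Real.norm_eq_abs, abs_mul, abs_mul, abs_mul, abs_div,
      abs_of_pos (Real.exp_pos _), abs_of_pos (Real.rpow_pos_of_pos h1 _),
      abs_of_pos (Real.rpow_pos_of_pos h1 _), abs_of_pos hαk]
    apply le_of_eq
    ring

set_option maxHeartbeats 1000000 in
/-- Differentiation under the integral sign. -/
private lemma clfd_derivB (α : ℝ) (hα0 : 0 < α) (f : ℝ → ℝ) (s₀ : ℝ)
    (hf : AEStronglyMeasurable f (volume.restrict (Set.Ioi (0:ℝ))))
    (k : ℕ)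
    (hconvk : ∀ s > s₀, IntegrableOn
      (fun t : ℝ => Real.exp (-s * t ^ α / α) * (t ^ (k * α) * |f t|) * t ^ (α - 1))
      (Set.Ioi (0:ℝ)))
    (hconvk1 : ∀ s > s₀, IntegrableOn
      (fun t : ℝ => Real.exp (-s * t ^ α / α) * (t ^ (((k+1 : ℕ) : ℝ) * α) * |f t|) * t ^ (α - 1))
      (Set.Ioi (0:ℝ)))
    (u : ℝ) (hu : s₀ < u) :
    HasDerivAt
      (fun x : ℝ => ∫ t in Set.Ioi (0:ℝ),
        Real.exp (-x * t ^ α / α) * (t ^ (k * α) / α ^ k * f t) * t ^ (α - 1))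
      (-(∫ t in Set.Ioi (0:ℝ),
        Real.exp (-u * t ^ α / α) * (t ^ (((k+1 : ℕ) : ℝ) * α) / α ^ (k+1) * f t) * t ^ (α - 1)))
      u := by
  have hε : (0:ℝ) < (u - s₀)/2 := by linarith
  have hm : s₀ < (u + s₀)/2 := by linarith
  set m : ℝ := (u + s₀)/2 with hmdef
  have hmeas : ∀ x : ℝ, AEStronglyMeasurable
      (fun t : ℝ => Real.exp (-x * t ^ α / α) * (t ^ (k * α) / α ^ k * f t) * t ^ (α - 1))
      (volume.restrict (Set.Ioi (0:ℝ))) := fun x =>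
    clfd_aesm hf
      (fun t => Real.exp (-x * t ^ α / α) * (t ^ ((k:ℝ) * α) / α ^ k) * t ^ (α - 1))
      (by fun_prop) _ (by funext t; ring)
  have hmeas' : AEStronglyMeasurable
      (fun t : ℝ => -(Real.exp (-u * t ^ α / α) *
        (t ^ (((k+1 : ℕ) : ℝ) * α) / α ^ (k+1) * f t) * t ^ (α - 1)))
      (volume.restrict (Set.Ioi (0:ℝ))) := by
    refine (clfd_aesm hf
      (fun t => Real.exp (-u * t ^ α / α) * (t ^ (((k+1 : ℕ) : ℝ) * α) / α ^ (k+1)) * t ^ (α - 1))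
      (by fun_prop) _ (by funext t; ring)).neg
  have hint : Integrable
      (fun t : ℝ => Real.exp (-u * t ^ α / α) * (t ^ (k * α) / α ^ k * f t) * t ^ (α - 1))
      (volume.restrict (Set.Ioi (0:ℝ))) := clfd_intA α hα0 f hf k u (hconvk u hu)
  have hbound_int : Integrable
      (fun t : ℝ => (1/α^(k+1)) *
        (Real.exp (-m * t ^ α / α) * (t ^ (((k+1 : ℕ) : ℝ) * α) * |f t|) * t ^ (α - 1)))
      (volume.restrict (Set.Ioi (0:ℝ))) := (hconvk1 m hm).const_mul _
  have hbound : ∀ᵐ t ∂(volume.restrict (Set.Ioi (0:ℝ))), ∀ x ∈ Metric.ball u ((u - s₀)/2),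
      ‖-(Real.exp (-x * t ^ α / α) *
        (t ^ (((k+1 : ℕ) : ℝ) * α) / α ^ (k+1) * f t) * t ^ (α - 1))‖
      ≤ (1/α^(k+1)) *
        (Real.exp (-m * t ^ α / α) * (t ^ (((k+1 : ℕ) : ℝ) * α) * |f t|) * t ^ (α - 1)) := by
    filter_upwards [ae_restrict_mem measurableSet_Ioi] with t ht x hx
    have h1 : (0:ℝ) < t := ht
    have hαk : (0:ℝ) < α ^ (k+1) := pow_pos hα0 (k+1)
    have hxm : m ≤ x := by
      rw [Metric.mem_ball, Real.dist_eq, abs_sub_lt_iff] at hx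
      have := hx.2
      rw [hmdef]
      linarith
    have hT : (0:ℝ) < t ^ α := Real.rpow_pos_of_pos h1 α
    have hexp : Real.exp (-x * t ^ α / α) ≤ Real.exp (-m * t ^ α / α) := by
      apply Real.exp_le_exp.mpr
      rw [div_le_div_iff₀ hα0 hα0]
      nlinarith [mul_nonneg (mul_nonneg (sub_nonneg.mpr hxm) hT.le) hα0.le]
    rw [norm_neg, Real.norm_eq_abs, abs_mul, abs_mul, abs_mul, abs_div,
      abs_of_pos (Real.exp_pos _), abs_of_pos (Real.rpow_pos_of_pos h1 _),
      abs_of_pos (Real.rpow_pos_of_pos h1 _), abs_of_pos hαk]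
    calc Real.exp (-x * t ^ α / α) *
          (t ^ (((k+1 : ℕ) : ℝ) * α) / α ^ (k+1) * |f t|) * t ^ (α - 1)
        ≤ Real.exp (-m * t ^ α / α) *
          (t ^ (((k+1 : ℕ) : ℝ) * α) / α ^ (k+1) * |f t|) * t ^ (α - 1) := by
          have hQ : (0:ℝ) ≤ t ^ (((k+1 : ℕ) : ℝ) * α) / α ^ (k+1) * |f t| :=
            mul_nonneg (by positivity) (abs_nonneg _)
          exact mul_le_mul_of_nonneg_right
            (mul_le_mul_of_nonneg_right hexp hQ) (le_of_lt (Real.rpow_pos_of_pos h1 _))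
      _ = (1/α^(k+1)) *
          (Real.exp (-m * t ^ α / α) * (t ^ (((k+1 : ℕ) : ℝ) * α) * |f t|) * t ^ (α - 1)) := by
          ring
  have hdiff : ∀ᵐ t ∂(volume.restrict (Set.Ioi (0:ℝ))), ∀ x ∈ Metric.ball u ((u - s₀)/2),
      HasDerivAt
        (fun x : ℝ => Real.exp (-x * t ^ α / α) * (t ^ (k * α) / α ^ k * f t) * t ^ (α - 1))
        (-(Real.exp (-x * t ^ α / α) *
          (t ^ (((k+1 : ℕ) : ℝ) * α) / α ^ (k+1) * f t) * t ^ (α - 1))) x := by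
    filter_upwards [ae_restrict_mem measurableSet_Ioi] with t ht x hx
    have h1 : (0:ℝ) < t := ht
    have hd : HasDerivAt (fun x : ℝ => -x * t ^ α / α) (-1 * t ^ α / α) x :=
      (((hasDerivAt_id x).neg.mul_const (t ^ α)).div_const α)
    have hd2 := ((hd.exp.mul_const (t ^ ((k:ℝ) * α) / α ^ k * f t)).mul_const (t ^ (α - 1)))
    refine hd2.congr_deriv ?_
    have hsplit : t ^ (((k+1 : ℕ) : ℝ) * α) = t ^ α * t ^ ((k:ℝ) * α) := by
      have hcast : ((k+1 : ℕ) : ℝ) * α = α + (k:ℝ) * α := by push_cast; ring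
      rw [hcast, Real.rpow_add h1]
    rw [hsplit, pow_succ]
    field_simp
  have key := (hasDerivAt_integral_of_dominated_loc_of_deriv_le (Metric.ball_mem_nhds u hε)
    (Filter.Eventually.of_forall hmeas) hint hmeas' hbound hbound_int hdiff).2
  rw [integral_neg] at key
  exact key

theorem conformable_laplace_freq_diff (α : ℝ) (hα0 : 0 < α) (hα1 : α ≤ 1)
    (n : ℕ) (f : ℝ → ℝ) (s₀ : ℝ) (hs₀ : 0 < s₀)
    (hconv : ∀ k ≤ n, ∀ s > s₀, IntegrableOn
      (fun t : ℝ => Real.exp (-s * t ^ α / α) * (t ^ (k * α) * |f t|) * t ^ (α - 1))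
      (Set.Ioi (0 : ℝ))) :
    ∀ s > s₀,
      ∫ t in Set.Ioi (0 : ℝ),
          Real.exp (-s * t ^ α / α) * (t ^ (n * α) / α ^ n * f t) * t ^ (α - 1)
        = (-1 : ℝ) ^ n * iteratedDeriv n
            (fun u : ℝ => ∫ t in Set.Ioi (0 : ℝ),
              Real.exp (-u * t ^ α / α) * f t * t ^ (α - 1)) s := by
  intro s hs
  by_cases hf : AEStronglyMeasurable f (volume.restrict (Set.Ioi (0:ℝ)))
  · -- main case
    set G : ℕ → ℝ → ℝ := fun k u => ∫ t in Set.Ioi (0:ℝ),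
      Real.exp (-u * t ^ α / α) * (t ^ (k * α) / α ^ k * f t) * t ^ (α - 1) with hGdef
    have hFG0 : (fun u : ℝ => ∫ t in Set.Ioi (0:ℝ),
        Real.exp (-u * t ^ α / α) * f t * t ^ (α - 1)) = G 0 := by
      funext u
      simp only [hGdef, Nat.cast_zero, zero_mul, Real.rpow_zero, pow_zero, div_one, one_mul]
    have key : ∀ k, k ≤ n → Set.EqOn (iteratedDeriv k (G 0))
        (fun u => (-1:ℝ)^k * G k u) (Set.Ioi s₀) := by
      intro k
      induction k with
      | zero => intro _ u hu; simp [iteratedDeriv_zero]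
      | succ k ih =>
        intro hk u hu
        have hkn : k ≤ n := Nat.le_of_succ_le hk
        rw [iteratedDeriv_succ]
        have heq : iteratedDeriv k (G 0) =ᶠ[nhds u] fun u => (-1:ℝ)^k * G k u :=
          Filter.eventuallyEq_of_mem (Ioi_mem_nhds hu) (ih hkn)
        rw [heq.deriv_eq]
        have hd : HasDerivAt (G k) (-(G (k+1) u)) u :=
          clfd_derivB α hα0 f s₀ hf k (hconv k hkn) (hconv (k+1) hk) u hu
        rw [deriv_const_mul _ hd.differentiableAt, hd.deriv]
        ring
    have h1 := key n le_rfl hs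
    rw [hFG0, h1]
    show G n s = (-1:ℝ)^n * ((-1:ℝ)^n * G n s)
    rw [← mul_assoc, ← mul_pow]
    norm_num
  · -- degenerate case: everything is zero
    have hzero : ∀ (c : ℝ → ℝ), Measurable c → (∀ t ∈ Set.Ioi (0:ℝ), c t ≠ 0) →
        ∫ t in Set.Ioi (0:ℝ), c t * f t = 0 := fun c hc hc0 =>
      integral_non_aestronglyMeasurable (clfd_not_aesm f c hc hc0 hf)
    have hL : ∫ t in Set.Ioi (0 : ℝ),
        Real.exp (-s * t ^ α / α) * (t ^ (n * α) / α ^ n * f t) * t ^ (α - 1) = 0 := by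
      have he : (fun t : ℝ =>
          Real.exp (-s * t ^ α / α) * (t ^ (n * α) / α ^ n * f t) * t ^ (α - 1))
          = fun t =>
            (Real.exp (-s * t ^ α / α) * (t ^ ((n:ℝ) * α) / α ^ n) * t ^ (α - 1)) * f t := by
        funext t; ring
      rw [he]
      refine hzero _ (by fun_prop) fun t ht => ?_
      have h1 : (0:ℝ) < t := ht
      have := Real.rpow_pos_of_pos h1 ((n:ℝ) * α)
      have := Real.rpow_pos_of_pos h1 (α - 1)
      positivity
    have hF : (fun u : ℝ => ∫ t in Set.Ioi (0:ℝ),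
        Real.exp (-u * t ^ α / α) * f t * t ^ (α - 1)) = fun _ => (0:ℝ) := by
      funext u
      have he : (fun t : ℝ => Real.exp (-u * t ^ α / α) * f t * t ^ (α - 1))
          = fun t => (Real.exp (-u * t ^ α / α) * t ^ (α - 1)) * f t := by
        funext t; ring
      rw [he]
      refine hzero _ (by fun_prop) fun t ht => ?_
      have h1 : (0:ℝ) < t := ht
      have := Real.rpow_pos_of_pos h1 (α - 1)
      positivity
    rw [hL, hF, clfd_iter_zero]
    simp
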